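/- Key commutation relation: for all b ∈ B, w⁻¹ e₁ w b = λ⁻¹ b₍₂₎ w⁻¹ E_A(e₂ e₁ w b₍₁₎). Consequently, for all b ∈ B and x ∈ M₁, w⁻¹ x b = λ⁻¹ b₍₂₎ w⁻¹ E_{M₁}(e₂ x b₍₁₎), and for all x, y ∈ M₁ and b ∈ B, E_{M₁}(e₂ w y x b) = λ⁻¹ E_{M₁}(e₂ w y b₍₂₎) w⁻¹ E_{M₁}(e₂ w x b₍₁₎). -/

import Mathlib

open scoped TensorProduct
open TensorProduct

/-- A symmetric Markov extension `N ⊆ M` of `k`-algebras satisfying the symmetric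
product and weak irreducibility assumptions, together with its Jones tower
`N ⊆ M ⊆ M₁ ⊆ M₂` (the ambient algebra `R` plays the role of `M₂`), the
normalized trace `T = T₂` and the depth two conditions. -/
structure D2 (k : Type*) [Field k] (R : Type*) [Ring R] [Algebra k R] where
  N : Subalgebra k R
  M : Subalgebra k R
  M1 : Subalgebra k R
  hNM : N ≤ M
  hMM1 : M ≤ M1
  E : R →ₗ[k] R
  EM : R →ₗ[k] R
  EM1 : R →ₗ[k] R
  lam : k
  lam_ne : lam ≠ 0
  e1 : R
  e2 : R
  T : R →ₗ[k] k
  -- Markov extension data for E : M → N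
  nE : ℕ
  xb : Fin nE → R
  yb : Fin nE → R
  hxb : ∀ i, xb i ∈ M
  hyb : ∀ i, yb i ∈ M
  hE_mem : ∀ x ∈ M, E x ∈ N
  hE_one : E 1 = 1
  hE_left : ∀ n ∈ N, ∀ x ∈ M, E (n * x) = n * E x
  hE_right : ∀ n ∈ N, ∀ x ∈ M, E (x * n) = E x * n
  hdual1 : ∀ m ∈ M, ∑ i, E (m * xb i) * yb i = m
  hdual2 : ∀ m ∈ M, ∑ i, xb i * E (yb i * m) = m
  hindex : ∑ i, xb i * yb i = lam⁻¹ • (1 : R)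
  hindex' : ∑ i, yb i * xb i = lam⁻¹ • (1 : R)
  -- the normalized trace (T₂ on M₂ = R; it restricts to T on N, T₀ on M, T₁ on M₁)
  hT_one : T 1 = 1
  hT_tr : ∀ x y : R, T (x * y) = T (y * x)
  hTE : ∀ x ∈ M, T (E x) = T x
  hTEM : ∀ x ∈ M1, T (EM x) = T x
  hTEM1 : ∀ x : R, T (EM1 x) = T x
  -- symmetry of the Markov extension: E u = u E for all u ∈ U = C_M(N)
  hsymm : ∀ u ∈ M, (∀ y ∈ N, u * y = y * u) → ∀ x ∈ M, E (u * x) = E (x * u)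
  -- the basic construction M₁ = M e₁ M
  he1_mem : e1 ∈ M1
  he1_idem : e1 * e1 = e1
  he1_N : ∀ y ∈ N, e1 * y = y * e1
  hM1_gen : M1.toSubmodule = Submodule.span k {z : R | ∃ m ∈ M, ∃ m' ∈ M, z = m * e1 * m'}
  hEM_mem : ∀ x ∈ M1, EM x ∈ M
  hEM_one : EM 1 = 1
  hEM_left : ∀ m ∈ M, ∀ x ∈ M1, EM (m * x) = m * EM x
  hEM_right : ∀ m ∈ M, ∀ x ∈ M1, EM (x * m) = EM x * m
  hEM_e1 : ∀ m ∈ M, ∀ m' ∈ M, EM (m * e1 * m') = lam • (m * m')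
  he1_jones : ∀ x ∈ M, e1 * x * e1 = e1 * E x
  he1_jones' : ∀ x ∈ M, e1 * E x = E x * e1
  -- the iterated basic construction M₂ = M₁ e₂ M₁ (M₂ = R is the ambient algebra)
  he2_idem : e2 * e2 = e2
  he2_M : ∀ m ∈ M, e2 * m = m * e2
  hM2_gen : (⊤ : Submodule k R) = Submodule.span k {z : R | ∃ x ∈ M1, ∃ y ∈ M1, z = x * e2 * y}
  hEM1_mem : ∀ x : R, EM1 x ∈ M1
  hEM1_one : EM1 1 = 1
  hEM1_left : ∀ m ∈ M1, ∀ x : R, EM1 (m * x) = m * EM1 x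
  hEM1_right : ∀ m ∈ M1, ∀ x : R, EM1 (x * m) = EM1 x * m
  hEM1_e2 : ∀ x ∈ M1, ∀ y ∈ M1, EM1 (x * e2 * y) = lam • (x * y)
  he2_jones : ∀ x ∈ M1, e2 * x * e2 = e2 * EM x
  he2_jones' : ∀ x ∈ M1, e2 * EM x = EM x * e2
  -- braid-like relations and Pimsner-Popa relations
  hbraid1 : e1 * e2 * e1 = lam • e1
  hbraid2 : e2 * e1 * e2 = lam • e2
  hPP1 : ∀ x ∈ M1, x * e1 = lam⁻¹ • (EM (x * e1) * e1)
  hPP1' : ∀ x ∈ M1, e1 * x = lam⁻¹ • (e1 * EM (e1 * x))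
  hPP2 : ∀ x : R, x * e2 = lam⁻¹ • (EM1 (x * e2) * e2)
  hPP2' : ∀ x : R, e2 * x = lam⁻¹ • (e2 * EM1 (e2 * x))
  -- weak irreducibility: U = C_M(N) is Kanzaki separable with symmetric
  -- separability element ∑ sp i ⊗ sq i, and T₀ = T|U is non-degenerate on U
  nS : ℕ
  sp : Fin nS → R
  sq : Fin nS → R
  hsp : ∀ i, sp i ∈ M ∧ ∀ y ∈ N, sp i * y = y * sp i
  hsq : ∀ i, sq i ∈ M ∧ ∀ y ∈ N, sq i * y = y * sq i
  hsep_one : ∑ i, sp i * sq i = 1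
  hsep_cas : ∀ u ∈ M, (∀ y ∈ N, u * y = y * u) →
      ∑ i, (u * sp i) ⊗ₜ[k] sq i = ∑ i, sp i ⊗ₜ[k] (sq i * u)
  hsep_symm : ∑ i, sp i ⊗ₜ[k] sq i = ∑ i, sq i ⊗ₜ[k] sp i
  hU_nondeg : ∀ u ∈ M, (∀ y ∈ N, u * y = y * u) →
      (∀ u' ∈ M, (∀ y ∈ N, u' * y = y * u') → T (u * u') = 0) → u = 0
  -- depth two conditions
  nA : ℕ
  zb : Fin nA → R
  wb : Fin nA → R
  hzb : ∀ j, zb j ∈ M1 ∧ ∀ y ∈ N, zb j * y = y * zb j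
  hwb : ∀ j, wb j ∈ M1 ∧ ∀ y ∈ N, wb j * y = y * wb j
  hdualA1 : ∀ x ∈ M1, ∑ j, EM (x * zb j) * wb j = x
  hdualA2 : ∀ x ∈ M1, ∑ j, zb j * EM (wb j * x) = x
  nB : ℕ
  ub : Fin nB → R
  vb : Fin nB → R
  hub : ∀ i, ∀ y ∈ M, ub i * y = y * ub i
  hvb : ∀ i, ∀ y ∈ M, vb i * y = y * vb i
  hdualB1 : ∀ x : R, ∑ i, EM1 (x * ub i) * vb i = x
  hdualB2 : ∀ x : R, ∑ i, ub i * EM1 (vb i * x) = x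

namespace D2

variable {k : Type*} [Field k] {R : Type*} [Ring R] [Algebra k R]

/-- `U = C_M(N)`. -/
def U (D : D2 k R) : Subalgebra k R := D.M ⊓ Subalgebra.centralizer k (D.N : Set R)

/-- `V = C_{M₁}(M)`. -/
def V (D : D2 k R) : Subalgebra k R := D.M1 ⊓ Subalgebra.centralizer k (D.M : Set R)

/-- `W = C_{M₂}(M₁)`. -/
def W (D : D2 k R) : Subalgebra k R := Subalgebra.centralizer k (D.M1 : Set R)

/-- `A = C_{M₁}(N)`. -/
def A (D : D2 k R) : Subalgebra k R := D.M1 ⊓ Subalgebra.centralizer k (D.N : Set R)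

/-- `B = C_{M₂}(M)`. -/
def B (D : D2 k R) : Subalgebra k R := Subalgebra.centralizer k (D.M : Set R)

/-- `C = C_{M₂}(N)`. -/
def C (D : D2 k R) : Subalgebra k R := Subalgebra.centralizer k (D.N : Set R)

end D2
/-- Extension of the depth two setting by the symmetric separability element
`f = ∑ f1 i ⊗ f2 i` of `V = C_{M₁}(M)` and the invertible central element `w` of `V`
such that `f⁽¹⁾ ⊗ w f⁽²⁾` is the dual bases tensor of the trace `T` on `V`. -/
structure D2S (k : Type*) [Field k] (R : Type*) [Ring R] [Algebra k R] extends D2 k R where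
  nV : ℕ
  f1 : Fin nV → R
  f2 : Fin nV → R
  hf1 : ∀ i, f1 i ∈ M1 ∧ ∀ y ∈ M, f1 i * y = y * f1 i
  hf2 : ∀ i, f2 i ∈ M1 ∧ ∀ y ∈ M, f2 i * y = y * f2 i
  hf_one : ∑ i, f1 i * f2 i = 1
  hf_cas : ∀ v ∈ M1, (∀ y ∈ M, v * y = y * v) →
      ∑ i, (v * f1 i) ⊗ₜ[k] f2 i = ∑ i, f1 i ⊗ₜ[k] (f2 i * v)
  hf_symm : ∑ i, f1 i ⊗ₜ[k] f2 i = ∑ i, f2 i ⊗ₜ[k] f1 i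
  w : R
  winv : R
  hw_mem : w ∈ M1 ∧ ∀ y ∈ M, w * y = y * w
  hwinv_mem : winv ∈ M1 ∧ ∀ y ∈ M, winv * y = y * winv
  hw_inv : w * winv = 1 ∧ winv * w = 1
  hw_central : ∀ v ∈ M1, (∀ y ∈ M, v * y = y * v) → w * v = v * w
  hw_def : w * (∑ i, T (f2 i) • f1 i) = 1
  hw_dual : ∀ v ∈ M1, (∀ y ∈ M, v * y = y * v) → ∑ i, T (v * (w * f2 i)) • f1 i = v
/-- Extension of the depth two setting by the comultiplication `Δ`, the counit
(given by `ε(b) = ⟨1, b⟩`) and the antipode `S` on `B = C_{M₂}(M)`, characterized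
through the non-degenerate pairing `⟨a, b⟩ = λ⁻² T(a e₂ e₁ w b)` of `A` and `B`. -/
structure D2H (k : Type*) [Field k] (R : Type*) [Ring R] [Algebra k R] extends D2S k R where
  Δ : R →ₗ[k] R ⊗[k] R
  S : R →ₗ[k] R
  hΔ_mem : ∀ b, (∀ y ∈ M, b * y = y * b) →
      Δ b ∈ Submodule.span k {z : R ⊗[k] R |
        ∃ b1, (∀ y ∈ M, b1 * y = y * b1) ∧ ∃ b2, (∀ y ∈ M, b2 * y = y * b2) ∧
          z = b1 ⊗ₜ[k] b2}
  hΔ_def : ∀ a1 ∈ M1, (∀ y ∈ N, a1 * y = y * a1) →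
    ∀ a2 ∈ M1, (∀ y ∈ N, a2 * y = y * a2) →
    ∀ b, (∀ y ∈ M, b * y = y * b) →
    ∀ (m : ℕ) (b1 b2 : Fin m → R), Δ b = ∑ i, b1 i ⊗ₜ[k] b2 i →
      ∑ i, (lam⁻¹ ^ 2 * T (a1 * e2 * e1 * w * b1 i)) *
          (lam⁻¹ ^ 2 * T (a2 * e2 * e1 * w * b2 i))
        = lam⁻¹ ^ 2 * T (a1 * a2 * e2 * e1 * w * b)
  hS_mem : ∀ b, (∀ y ∈ M, b * y = y * b) → ∀ y ∈ M, S b * y = y * S b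
  hS_bijOn : Set.BijOn S {b : R | ∀ y ∈ M, b * y = y * b} {b : R | ∀ y ∈ M, b * y = y * b}
  hS_def : ∀ a ∈ M1, (∀ y ∈ N, a * y = y * a) →
    ∀ b, (∀ y ∈ M, b * y = y * b) →
      lam⁻¹ ^ 2 * T (a * e2 * e1 * w * b) = lam⁻¹ ^ 2 * T (S b * e1 * e2 * w * a)

namespace D2H

variable {k : Type*} [Field k] {R : Type*} [Ring R] [Algebra k R]

/-- The duality pairing `⟨a, b⟩ = λ⁻² T(a e₂ e₁ w b)`. -/
def pr (D : D2H k R) (a b : R) : k := D.lam⁻¹ ^ 2 * D.T (a * D.e2 * D.e1 * D.w * b)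

/-- The counit `ε(b) = ⟨1, b⟩`. -/
def eps (D : D2H k R) (b : R) : k := D.pr 1 b

end D2H

namespace D2H

variable {k : Type*} [Field k] {R : Type*} [Ring R] [Algebra k R]

/-- commutes with all of `M` -/
def MC (D : D2H k R) (x : R) : Prop := ∀ y ∈ D.M, x * y = y * x

/-- commutes with all of `N` -/
def NC (D : D2H k R) (x : R) : Prop := ∀ y ∈ D.N, x * y = y * x

variable (D : D2H k R)

lemma nc_of_mc {x : R} (h : D.MC x) : D.NC x := fun y hy => h y (D.hNM hy)

lemma mc_mul {x y : R} (hx : D.MC x) (hy : D.MC y) : D.MC (x * y) := fun z hz => by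
  rw [mul_assoc, hy z hz, ← mul_assoc, hx z hz, mul_assoc]

lemma nc_mul {x y : R} (hx : D.NC x) (hy : D.NC y) : D.NC (x * y) := fun z hz => by
  rw [mul_assoc, hy z hz, ← mul_assoc, hx z hz, mul_assoc]

lemma nc_smul {x : R} (c : k) (h : D.NC x) : D.NC (c • x) := fun y hy => by
  rw [smul_mul_assoc, h y hy, mul_smul_comm]

lemma mc_smul {x : R} (c : k) (h : D.MC x) : D.MC (c • x) := fun y hy => by
  rw [smul_mul_assoc, h y hy, mul_smul_comm]

lemma nc_sum {ι : Type*} {s : Finset ι} {f : ι → R} (h : ∀ i ∈ s, D.NC (f i)) :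
    D.NC (∑ i ∈ s, f i) := fun y hy => by
  rw [Finset.sum_mul, Finset.mul_sum]
  exact Finset.sum_congr rfl fun i hi => h i hi y hy

lemma mc_w : D.MC D.w := D.hw_mem.2
lemma mc_winv : D.MC D.winv := D.hwinv_mem.2
lemma mc_e2 : D.MC D.e2 := D.he2_M
lemma nc_e1 : D.NC D.e1 := D.he1_N
lemma nc_e2 : D.NC D.e2 := D.nc_of_mc D.mc_e2
lemma mc_f1 (l : Fin D.nV) : D.MC (D.f1 l) := (D.hf1 l).2
lemma mc_f2 (l : Fin D.nV) : D.MC (D.f2 l) := (D.hf2 l).2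
lemma mc_vb (i : Fin D.nB) : D.MC (D.vb i) := D.hvb i
lemma mc_ub (i : Fin D.nB) : D.MC (D.ub i) := D.hub i

lemma nc_EM1 {x : R} (h : D.NC x) : D.NC (D.EM1 x) := fun n hn => by
  have hn1 : n ∈ D.M1 := D.hMM1 (D.hNM hn)
  rw [← D.hEM1_right n hn1 x, h n hn, D.hEM1_left n hn1 x]

lemma mc_EM1 {x : R} (h : D.MC x) : D.MC (D.EM1 x) := fun m hm => by
  have hm1 : m ∈ D.M1 := D.hMM1 hm
  rw [← D.hEM1_right m hm1 x, h m hm, D.hEM1_left m hm1 x]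

lemma tEr (x : R) {m : R} (hm : m ∈ D.M1) : D.T (D.EM1 x * m) = D.T (x * m) := by
  rw [← D.hEM1_right m hm x, D.hTEM1]

lemma tEl (x : R) {m : R} (hm : m ∈ D.M1) : D.T (m * D.EM1 x) = D.T (m * x) := by
  rw [← D.hEM1_left m hm x, D.hTEM1]

lemma sum_xb_e1_yb : (∑ i, D.xb i * D.e1 * D.yb i) = (1 : R) := by
  have key : ∀ m ∈ D.M, (∑ i, D.xb i * D.e1 * D.yb i) * (m * D.e1) = m * D.e1 := by
    intro m hm
    rw [Finset.sum_mul]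
    have h1 : ∀ i : Fin D.nE, D.xb i * D.e1 * D.yb i * (m * D.e1)
        = D.xb i * D.E (D.yb i * m) * D.e1 := by
      intro i
      have hj : D.e1 * (D.yb i * m) * D.e1 = D.e1 * D.E (D.yb i * m) :=
        D.he1_jones _ (D.M.mul_mem (D.hyb i) hm)
      have hj' := D.he1_jones' _ (D.M.mul_mem (D.hyb i) hm)
      calc D.xb i * D.e1 * D.yb i * (m * D.e1)
          = D.xb i * (D.e1 * (D.yb i * m) * D.e1) := by simp only [mul_assoc]
        _ = D.xb i * (D.E (D.yb i * m) * D.e1) := by rw [hj, hj']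
        _ = D.xb i * D.E (D.yb i * m) * D.e1 := by rw [mul_assoc]
    rw [Finset.sum_congr rfl fun i _ => h1 i, ← Finset.sum_mul, D.hdual2 m hm]
  have key2 : ∀ x ∈ Submodule.span k {z : R | ∃ m ∈ D.M, ∃ m' ∈ D.M, z = m * D.e1 * m'},
      (∑ i, D.xb i * D.e1 * D.yb i) * x = x := by
    intro x hx
    induction hx using Submodule.span_induction with
    | mem z hz =>
      obtain ⟨m, hm, m', hm', rfl⟩ := hz
      rw [show m * D.e1 * m' = (m * D.e1) * m' from rfl, ← mul_assoc, key m hm]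
    | zero => rw [mul_zero]
    | add x y hx hy ihx ihy => rw [mul_add, ihx, ihy]
    | smul c x hx ih => rw [mul_smul_comm, ih]
  have h1 : (1 : R) ∈ Submodule.span k {z : R | ∃ m ∈ D.M, ∃ m' ∈ D.M, z = m * D.e1 * m'} := by
    rw [← D.hM1_gen]; exact D.M1.one_mem
  simpa using key2 1 h1

lemma T_mul_e1 {x : R} (hx : D.MC x) : D.T (x * D.e1) = D.lam * D.T x := by
  have h0 : D.T x = D.lam⁻¹ * D.T (x * D.e1) := by
    conv_lhs => rw [← mul_one x, ← D.sum_xb_e1_yb]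
    rw [Finset.mul_sum, map_sum]
    have h1 : ∀ i : Fin D.nE, D.T (x * (D.xb i * D.e1 * D.yb i))
        = D.T (x * D.e1 * (D.yb i * D.xb i)) := by
      intro i
      have c1 : x * (D.xb i * D.e1 * D.yb i) = D.xb i * (x * D.e1 * D.yb i) := by
        rw [show x * (D.xb i * D.e1 * D.yb i) = (x * D.xb i) * (D.e1 * D.yb i) by
          simp only [mul_assoc], hx _ (D.hxb i)]
        simp only [mul_assoc]
      rw [c1, D.hT_tr]
      congr 1
      simp only [mul_assoc]
    rw [Finset.sum_congr rfl fun i _ => h1 i, ← map_sum, ← Finset.mul_sum, D.hindex',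
      mul_smul_comm, mul_one, map_smul, smul_eq_mul]
  rw [h0, ← mul_assoc, mul_inv_cancel₀ D.lam_ne, one_mul]

lemma T_winv_e1_w {x : R} (hx : D.MC x) : D.T (x * (D.winv * D.e1 * D.w)) = D.lam * D.T x := by
  have c1 : D.T (x * (D.winv * D.e1 * D.w)) = D.T ((D.w * x * D.winv) * D.e1) := by
    rw [show x * (D.winv * D.e1 * D.w) = (x * D.winv * D.e1) * D.w by simp only [mul_assoc],
      D.hT_tr]
    congr 1
    simp only [mul_assoc]
  have c2 : D.T (D.w * x * D.winv) = D.T x := by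
    rw [D.hT_tr, ← mul_assoc, D.hw_inv.2, one_mul]
  rw [c1, D.T_mul_e1 (D.mc_mul (D.mc_mul D.mc_w hx) D.mc_winv), c2]

end D2H
namespace D2H

variable {k : Type*} [Field k] {R : Type*} [Ring R] [Algebra k R]

variable (D : D2H k R)

lemma pp2'_rev (x : R) : D.e2 * D.EM1 (D.e2 * x) = D.lam • (D.e2 * x) := by
  calc D.e2 * D.EM1 (D.e2 * x)
      = (D.lam * D.lam⁻¹) • (D.e2 * D.EM1 (D.e2 * x)) := by
        rw [mul_inv_cancel₀ D.lam_ne, one_smul]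
    _ = D.lam • (D.lam⁻¹ • (D.e2 * D.EM1 (D.e2 * x))) := by rw [smul_smul]
    _ = D.lam • (D.e2 * x) := by rw [← D.hPP2' x]

lemma braid1' (x : R) : D.e1 * (D.e2 * (D.e1 * x)) = D.lam • (D.e1 * x) := by
  have h := congrArg (· * x) D.hbraid1
  simpa only [mul_assoc, smul_mul_assoc] using h

/-- `a₂(z) = λ⁻¹ E_{M₁}(z w⁻¹ e₁ e₂)`, the A-side representative of the
functional `y ↦ T(z y)` on `B`. -/
noncomputable def a2 (D : D2H k R) (z : R) : R :=
  D.lam⁻¹ • D.EM1 (z * D.winv * D.e1 * D.e2)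

lemma a2_mem (z : R) : D.a2 z ∈ D.M1 := D.M1.smul_mem (D.hEM1_mem _) _

lemma a2_nc {z : R} (hz : D.NC z) : D.NC (D.a2 z) :=
  D.nc_smul _ (D.nc_EM1 (D.nc_mul (D.nc_mul (D.nc_mul hz (D.nc_of_mc D.mc_winv)) D.nc_e1) D.nc_e2))

lemma T8 {z y : R} (hz : D.MC z) (hy : D.MC y) :
    D.T (D.a2 z * D.e2 * D.e1 * D.w * y) = D.lam ^ 2 * D.T (z * y) := by
  set F := D.EM1 (D.e2 * (D.e1 * (D.w * y))) with hF
  have hFm : F ∈ D.M1 := D.hEM1_mem _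
  calc D.T (D.a2 z * D.e2 * D.e1 * D.w * y)
      = D.T (D.a2 z * (D.e2 * (D.e1 * (D.w * y)))) := by simp only [mul_assoc]
    _ = D.T (D.a2 z * (D.lam⁻¹ • (D.e2 * F))) := by rw [D.hPP2' (D.e1 * (D.w * y))]
    _ = D.lam⁻¹ * D.T (D.a2 z * (D.e2 * F)) := by rw [mul_smul_comm, map_smul, smul_eq_mul]
    _ = D.lam⁻¹ * D.T (D.EM1 (D.a2 z * D.e2 * F)) := by rw [mul_assoc, D.hTEM1]
    _ = D.lam⁻¹ * D.T (D.lam • (D.a2 z * F)) := by rw [D.hEM1_e2 _ (D.a2_mem z) _ hFm]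
    _ = D.lam⁻¹ * (D.lam * D.T (D.a2 z * F)) := by rw [map_smul, smul_eq_mul]
    _ = D.T (D.a2 z * F) := by rw [← mul_assoc, inv_mul_cancel₀ D.lam_ne, one_mul]
    _ = D.lam⁻¹ * D.T (D.EM1 (z * D.winv * D.e1 * D.e2) * F) := by
        rw [a2, smul_mul_assoc, map_smul, smul_eq_mul]
    _ = D.lam⁻¹ * D.T ((z * D.winv * D.e1 * D.e2) * F) := by rw [D.tEr _ hFm]
    _ = D.lam⁻¹ * D.T (z * (D.winv * (D.e1 * (D.e2 * F)))) := by simp only [mul_assoc]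
    _ = D.lam⁻¹ * D.T (z * (D.winv * (D.e1 * (D.lam • (D.e2 * (D.e1 * (D.w * y))))))) := by
        rw [hF, D.pp2'_rev (D.e1 * (D.w * y))]
    _ = D.lam⁻¹ * (D.lam * D.T (z * (D.winv * (D.e1 * (D.e2 * (D.e1 * (D.w * y))))))) := by
        rw [mul_smul_comm, mul_smul_comm, mul_smul_comm, map_smul, smul_eq_mul]
    _ = D.T (z * (D.winv * (D.e1 * (D.e2 * (D.e1 * (D.w * y)))))) := by
        rw [← mul_assoc, inv_mul_cancel₀ D.lam_ne, one_mul]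
    _ = D.T (z * (D.winv * (D.lam • (D.e1 * (D.w * y))))) := by rw [D.braid1' (D.w * y)]
    _ = D.lam * D.T (z * (D.winv * (D.e1 * (D.w * y)))) := by
        rw [mul_smul_comm, mul_smul_comm, map_smul, smul_eq_mul]
    _ = D.lam * D.T ((y * z) * (D.winv * D.e1 * D.w)) := by
        rw [show z * (D.winv * (D.e1 * (D.w * y))) = (z * (D.winv * D.e1 * D.w)) * y by
          simp only [mul_assoc], D.hT_tr]
        congr 2
        simp only [mul_assoc]
    _ = D.lam * (D.lam * D.T (y * z)) := by rw [D.T_winv_e1_w (D.mc_mul hy hz)]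
    _ = D.lam ^ 2 * D.T (z * y) := by rw [D.hT_tr, ← mul_assoc, sq]

lemma T8' {z y : R} (hz : D.MC z) (hy : D.MC y) :
    D.T (z * y) = D.lam⁻¹ ^ 2 * D.T (D.a2 z * D.e2 * D.e1 * D.w * y) := by
  rw [D.T8 hz hy, ← mul_assoc, ← mul_pow, inv_mul_cancel₀ D.lam_ne, one_pow, one_mul]

lemma A_nondeg {x : R} (h1 : x ∈ D.M1) (h2 : D.NC x)
    (h : ∀ a ∈ D.M1, D.NC a → D.T (x * a) = 0) : x = 0 := by
  have hx := D.hdualA1 x h1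
  rw [← hx]
  have key : ∀ j : Fin D.nA, D.EM (x * D.zb j) = 0 := by
    intro j
    have m1 : x * D.zb j ∈ D.M1 := D.M1.mul_mem h1 (D.hzb j).1
    have hxz : D.NC (x * D.zb j) := D.nc_mul h2 (D.hzb j).2
    apply D.hU_nondeg _ (D.hEM_mem _ m1)
    · intro n hn
      have hnM : n ∈ D.M := D.hNM hn
      rw [← D.hEM_right n hnM _ m1, hxz n hn, D.hEM_left n hnM _ m1]
    · intro u' hu' hNCu'
      rw [← D.hEM_right u' hu' _ m1, D.hTEM _ (D.M1.mul_mem m1 (D.hMM1 hu')), mul_assoc]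
      exact h _ (D.M1.mul_mem (D.hzb j).1 (D.hMM1 hu')) (D.nc_mul (D.hzb j).2 hNCu')
  calc (∑ j, D.EM (x * D.zb j) * D.wb j) = ∑ j : Fin D.nA, (0 : R) := by
        refine Finset.sum_congr rfl fun j _ => ?_
        rw [key j, zero_mul]
    _ = 0 := Finset.sum_const_zero

end D2H
namespace D2H

variable {k : Type*} [Field k] {R : Type*} [Ring R] [Algebra k R]

variable (D : D2H k R)

lemma G_scalar {n : ℕ} {b1 b2 : Fin n → R} {b : R} (hb : D.MC b)
    (h1 : ∀ i, D.MC (b1 i)) (h2 : ∀ i, D.MC (b2 i))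
    (hrep : D.Δ b = ∑ i, b1 i ⊗ₜ[k] b2 i)
    {a : R} (ham : a ∈ D.M1) (han : D.NC a) {c : R} (hc : D.MC c) :
    D.T (c * (D.winv * D.e1 * D.w * b) * a)
      = D.lam⁻¹ * ∑ j, D.T (c * (b2 j * D.winv * D.EM1 (D.e2 * D.e1 * D.w * b1 j)) * a) := by
  set a1 : Fin D.nV → R := fun l => a * D.f1 l * D.winv with ha1def
  set zeta : Fin D.nV → R := fun l => D.w * D.f2 l * c with hzdef
  have ha1m : ∀ l, a1 l ∈ D.M1 := fun l =>
    D.M1.mul_mem (D.M1.mul_mem ham (D.hf1 l).1) D.hwinv_mem.1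
  have ha1n : ∀ l, D.NC (a1 l) := fun l =>
    D.nc_mul (D.nc_mul han (D.nc_of_mc (D.mc_f1 l))) (D.nc_of_mc D.mc_winv)
  have hzm : ∀ l, D.MC (zeta l) := fun l => D.mc_mul (D.mc_mul D.mc_w (D.mc_f2 l)) hc
  -- Step 1 : per-j expansion
  have step1 : ∀ j, D.T (c * (b2 j * D.winv * D.EM1 (D.e2 * D.e1 * D.w * b1 j)) * a)
      = ∑ l, D.T (zeta l * b2 j) * D.T (a1 l * D.e2 * D.e1 * D.w * b1 j) := by
    intro j
    set c2 := D.EM1 (D.e2 * D.e1 * D.w * b1 j) with hc2def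
    have hc2m : c2 ∈ D.M1 := D.hEM1_mem _
    have hZm : D.winv * (c2 * a) ∈ D.M1 :=
      D.M1.mul_mem D.hwinv_mem.1 (D.M1.mul_mem hc2m ham)
    have e1 : D.T (c * (b2 j * D.winv * c2) * a)
        = D.T (D.EM1 (c * b2 j) * (D.winv * (c2 * a))) := by
      rw [D.tEr _ hZm]
      congr 1
      simp only [mul_assoc]
    have hexp := D.hw_dual (D.EM1 (c * b2 j)) (D.hEM1_mem _)
      (D.mc_EM1 (D.mc_mul hc (h2 j)))
    have e2 : D.T (D.EM1 (c * b2 j) * (D.winv * (c2 * a)))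
        = ∑ l, D.T (D.EM1 (c * b2 j) * (D.w * D.f2 l)) * D.T (D.f1 l * (D.winv * (c2 * a))) := by
      conv_lhs => rw [← hexp]
      rw [Finset.sum_mul, map_sum]
      refine Finset.sum_congr rfl fun l _ => ?_
      rw [smul_mul_assoc, map_smul, smul_eq_mul]
    have e3 : ∀ l, D.T (D.EM1 (c * b2 j) * (D.w * D.f2 l)) = D.T (zeta l * b2 j) := by
      intro l
      rw [D.tEr _ (D.M1.mul_mem D.hw_mem.1 (D.hf2 l).1), D.hT_tr]
      congr 1
      simp only [hzdef, mul_assoc]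
    have e4 : ∀ l, D.T (D.f1 l * (D.winv * (c2 * a)))
        = D.T (a1 l * D.e2 * D.e1 * D.w * b1 j) := by
      intro l
      have w1 : D.f1 l * (D.winv * (c2 * a)) = (D.f1 l * D.winv * c2) * a := by
        simp only [mul_assoc]
      rw [w1, D.hT_tr, show a * (D.f1 l * D.winv * c2) = (a * D.f1 l * D.winv) * c2 by
        simp only [mul_assoc], hc2def, D.tEl _ (ha1m l)]
      congr 1
      simp only [ha1def, mul_assoc]
    rw [e1, e2]
    exact Finset.sum_congr rfl fun l _ => by rw [e3 l, e4 l]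
  -- Step 2 : swap sums and apply `hΔ_def`
  have hcan : D.lam ^ 2 * D.lam⁻¹ ^ 2 = 1 := by
    rw [← mul_pow, mul_inv_cancel₀ D.lam_ne, one_pow]
  have step2 : (∑ j, D.T (c * (b2 j * D.winv * D.EM1 (D.e2 * D.e1 * D.w * b1 j)) * a))
      = ∑ l, D.T (a1 l * D.a2 (zeta l) * D.e2 * D.e1 * D.w * b) := by
    rw [Finset.sum_congr rfl fun j _ => step1 j, Finset.sum_comm]
    refine Finset.sum_congr rfl fun l _ => ?_
    have hΔl := D.hΔ_def (a1 l) (ha1m l) (ha1n l) (D.a2 (zeta l)) (D.a2_mem _)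
      (D.a2_nc (D.nc_of_mc (hzm l))) b hb n b1 b2 hrep
    calc (∑ j, D.T (zeta l * b2 j) * D.T (a1 l * D.e2 * D.e1 * D.w * b1 j))
        = ∑ j, D.lam ^ 2 * ((D.lam⁻¹ ^ 2 * D.T (a1 l * D.e2 * D.e1 * D.w * b1 j)) *
            (D.lam⁻¹ ^ 2 * D.T (D.a2 (zeta l) * D.e2 * D.e1 * D.w * b2 j))) := by
          refine Finset.sum_congr rfl fun j _ => ?_
          have h4 : D.lam ^ 2 * D.lam⁻¹ ^ 4 = D.lam⁻¹ ^ 2 := by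
            have h5 : D.lam⁻¹ ^ 4 = D.lam⁻¹ ^ 2 * D.lam⁻¹ ^ 2 := by ring
            rw [h5, ← mul_assoc, hcan, one_mul]
          rw [D.T8' (hzm l) (h2 j)]
          ring_nf
          rw [h4]
      _ = D.lam ^ 2 * (D.lam⁻¹ ^ 2 * D.T (a1 l * D.a2 (zeta l) * D.e2 * D.e1 * D.w * b)) := by
          rw [← Finset.mul_sum, hΔl]
      _ = D.T (a1 l * D.a2 (zeta l) * D.e2 * D.e1 * D.w * b) := by
          rw [← mul_assoc, hcan, one_mul]
  -- Step 3 : collapse each l-term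
  set Fb := D.EM1 (D.e2 * (D.e1 * (D.w * b))) with hFbdef
  have hFbm : Fb ∈ D.M1 := D.hEM1_mem _
  have step3 : ∀ l, D.T (a1 l * D.a2 (zeta l) * D.e2 * D.e1 * D.w * b)
      = D.lam * D.T (a * (D.f1 l * (D.f2 l * (c * (D.winv * (D.e1 * (D.w * b))))))) := by
    intro l
    have hXm : a1 l * D.a2 (zeta l) ∈ D.M1 := D.M1.mul_mem (ha1m l) (D.a2_mem _)
    calc D.T (a1 l * D.a2 (zeta l) * D.e2 * D.e1 * D.w * b)
        = D.T ((a1 l * D.a2 (zeta l)) * (D.e2 * (D.e1 * (D.w * b)))) := by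
          simp only [mul_assoc]
      _ = D.T ((a1 l * D.a2 (zeta l)) * (D.lam⁻¹ • (D.e2 * Fb))) := by
          rw [D.hPP2' (D.e1 * (D.w * b))]
      _ = D.lam⁻¹ * D.T ((a1 l * D.a2 (zeta l)) * (D.e2 * Fb)) := by
          rw [mul_smul_comm, map_smul, smul_eq_mul]
      _ = D.lam⁻¹ * D.T (D.EM1 ((a1 l * D.a2 (zeta l)) * D.e2 * Fb)) := by
          rw [mul_assoc _ D.e2 Fb, D.hTEM1]
      _ = D.lam⁻¹ * D.T (D.lam • ((a1 l * D.a2 (zeta l)) * Fb)) := by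
          rw [D.hEM1_e2 _ hXm _ hFbm]
      _ = D.T ((a1 l * D.a2 (zeta l)) * Fb) := by
          rw [map_smul, smul_eq_mul, ← mul_assoc, inv_mul_cancel₀ D.lam_ne, one_mul]
      _ = D.lam⁻¹ * D.T (a1 l * (D.EM1 (zeta l * D.winv * D.e1 * D.e2) * Fb)) := by
          rw [a2, mul_smul_comm, smul_mul_assoc, map_smul, smul_eq_mul, mul_assoc]
      _ = D.lam⁻¹ * D.T (a1 l * D.EM1 (zeta l * D.winv * D.e1 * D.e2 * Fb)) := by
          rw [D.hEM1_right Fb hFbm]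
      _ = D.lam⁻¹ * D.T (a1 l * (zeta l * D.winv * D.e1 * D.e2 * Fb)) := by
          rw [D.tEl _ (ha1m l)]
      _ = D.lam⁻¹ * D.T (a * (D.f1 l * (D.winv * (D.w * (D.f2 l * (c * (D.winv *
            (D.e1 * (D.e2 * Fb))))))))) := by
          congr 1; congr 1; simp only [ha1def, hzdef, mul_assoc]
      _ = D.lam⁻¹ * D.T (a * (D.f1 l * (D.f2 l * (c * (D.winv * (D.e1 * (D.e2 * Fb))))))) := by
          rw [← mul_assoc D.winv D.w, D.hw_inv.2, one_mul]
      _ = D.lam⁻¹ * D.T (a * (D.f1 l * (D.f2 l * (c * (D.winv * (D.e1 *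
            (D.lam • (D.e2 * (D.e1 * (D.w * b)))))))))) := by
          rw [hFbdef, D.pp2'_rev (D.e1 * (D.w * b))]
      _ = D.lam⁻¹ * (D.lam * D.T (a * (D.f1 l * (D.f2 l * (c * (D.winv * (D.e1 *
            (D.e2 * (D.e1 * (D.w * b)))))))))) := by
          simp only [mul_smul_comm, map_smul, smul_eq_mul]
      _ = D.lam⁻¹ * (D.lam * D.T (a * (D.f1 l * (D.f2 l * (c * (D.winv *
            (D.lam • (D.e1 * (D.w * b))))))))) := by
          rw [D.braid1' (D.w * b)]
      _ = D.lam⁻¹ * (D.lam * (D.lam * D.T (a * (D.f1 l * (D.f2 l * (c * (D.winv *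
            (D.e1 * (D.w * b))))))))) := by
          simp only [mul_smul_comm, map_smul, smul_eq_mul]
      _ = D.lam * D.T (a * (D.f1 l * (D.f2 l * (c * (D.winv * (D.e1 * (D.w * b))))))) := by
          rw [← mul_assoc, ← mul_assoc, inv_mul_cancel₀ D.lam_ne, one_mul]
  -- Step 4 : sum over l via `hf_one`
  have step4 : (∑ l, D.T (a1 l * D.a2 (zeta l) * D.e2 * D.e1 * D.w * b))
      = D.lam * D.T (a * (c * (D.winv * (D.e1 * (D.w * b))))) := by
    rw [Finset.sum_congr rfl fun l _ => step3 l, ← Finset.mul_sum, ← map_sum]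
    congr 2
    calc (∑ l, a * (D.f1 l * (D.f2 l * (c * (D.winv * (D.e1 * (D.w * b)))))))
        = ∑ l, a * ((D.f1 l * D.f2 l) * (c * (D.winv * (D.e1 * (D.w * b))))) := by
          refine Finset.sum_congr rfl fun l _ => ?_
          simp only [mul_assoc]
      _ = a * ((∑ l, D.f1 l * D.f2 l) * (c * (D.winv * (D.e1 * (D.w * b))))) := by
          rw [Finset.sum_mul, Finset.mul_sum]
      _ = a * (c * (D.winv * (D.e1 * (D.w * b)))) := by rw [D.hf_one, one_mul]
  -- Conclusion
  rw [step2, step4, ← mul_assoc D.lam⁻¹ D.lam, inv_mul_cancel₀ D.lam_ne, one_mul, D.hT_tr]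
  congr 1
  simp only [mul_assoc]

end D2H
namespace D2H

variable {k : Type*} [Field k] {R : Type*} [Ring R] [Algebra k R]

variable (D : D2H k R)

lemma P1_good {n : ℕ} {b1 b2 : Fin n → R} {b : R} (hb : D.MC b)
    (h1 : ∀ i, D.MC (b1 i)) (h2 : ∀ i, D.MC (b2 i))
    (hrep : D.Δ b = ∑ i, b1 i ⊗ₜ[k] b2 i) :
    D.winv * D.e1 * D.w * b
      = D.lam⁻¹ • ∑ i, b2 i * D.winv * D.EM1 (D.e2 * D.e1 * D.w * b1 i) := by
  set X := D.winv * D.e1 * D.w * b with hX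
  set Y := D.lam⁻¹ • ∑ i, b2 i * D.winv * D.EM1 (D.e2 * D.e1 * D.w * b1 i) with hY
  have hXn : D.NC X := by
    exact D.nc_mul (D.nc_mul (D.nc_mul (D.nc_of_mc D.mc_winv) D.nc_e1)
      (D.nc_of_mc D.mc_w)) (D.nc_of_mc hb)
  have hterm_n : ∀ i, D.NC (b2 i * D.winv * D.EM1 (D.e2 * D.e1 * D.w * b1 i)) := by
    intro i
    refine D.nc_mul (D.nc_mul (D.nc_of_mc (h2 i)) (D.nc_of_mc D.mc_winv)) (D.nc_EM1 ?_)
    exact D.nc_mul (D.nc_mul (D.nc_mul D.nc_e2 D.nc_e1) (D.nc_of_mc D.mc_w))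
      (D.nc_of_mc (h1 i))
  have hYn : D.NC Y := D.nc_smul _ (D.nc_sum fun i _ => hterm_n i)
  have key : ∀ i0 : Fin D.nB, D.EM1 (D.vb i0 * X) = D.EM1 (D.vb i0 * Y) := by
    intro i0
    have hδ : D.EM1 (D.vb i0 * X) - D.EM1 (D.vb i0 * Y) = 0 := by
      apply D.A_nondeg (D.M1.sub_mem (D.hEM1_mem _) (D.hEM1_mem _))
      · exact fun y hy => by
          rw [sub_mul, mul_sub, D.nc_EM1 (D.nc_mul (D.nc_of_mc (D.mc_vb i0)) hXn) y hy,
            D.nc_EM1 (D.nc_mul (D.nc_of_mc (D.mc_vb i0)) hYn) y hy]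
      · intro a ham han
        rw [sub_mul, map_sub, D.tEr _ ham, D.tEr _ ham, sub_eq_zero]
        have hG := D.G_scalar hb h1 h2 hrep ham han (D.mc_vb i0)
        calc D.T (D.vb i0 * X * a)
            = D.T (D.vb i0 * (D.winv * D.e1 * D.w * b) * a) := by rw [hX]
          _ = D.lam⁻¹ * ∑ j, D.T (D.vb i0 *
                (b2 j * D.winv * D.EM1 (D.e2 * D.e1 * D.w * b1 j)) * a) := hG
          _ = D.T (D.vb i0 * Y * a) := by
              rw [hY]
              conv_rhs => rw [mul_smul_comm, smul_mul_assoc, map_smul, smul_eq_mul,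
                Finset.mul_sum, Finset.sum_mul, map_sum]
    exact sub_eq_zero.1 hδ
  calc X = ∑ i, D.ub i * D.EM1 (D.vb i * X) := (D.hdualB2 X).symm
    _ = ∑ i, D.ub i * D.EM1 (D.vb i * Y) := Finset.sum_congr rfl fun i _ => by rw [key i]
    _ = Y := D.hdualB2 Y

end D2H
namespace D2H

variable {k : Type*} [Field k] {R : Type*} [Ring R] [Algebra k R]

variable (D : D2H k R)

lemma e1_eq : D.e1 = D.lam⁻¹ • (D.e1 * D.w * D.EM (D.e1 * D.winv)) := by
  set sR := D.EM (D.e1 * D.w) with hsR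
  set sR' := D.EM (D.e1 * D.winv) with hsR'
  have hsR'm : sR' ∈ D.M := D.hEM_mem _ (D.M1.mul_mem D.he1_mem D.hwinv_mem.1)
  have hw1 : D.e1 * D.w = D.lam⁻¹ • (D.e1 * sR) := D.hPP1' D.w D.hw_mem.1
  have hw2 : D.e1 * D.winv = D.lam⁻¹ • (D.e1 * sR') := D.hPP1' D.winv D.hwinv_mem.1
  have star : D.e1 = D.lam⁻¹ • (D.lam⁻¹ • (D.e1 * (sR * sR'))) := by
    calc D.e1 = D.e1 * D.winv * D.w := by rw [mul_assoc, D.hw_inv.2, mul_one]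
      _ = (D.lam⁻¹ • (D.e1 * sR')) * D.w := by rw [hw2]
      _ = D.lam⁻¹ • (D.e1 * (sR' * D.w)) := by rw [smul_mul_assoc, mul_assoc]
      _ = D.lam⁻¹ • (D.e1 * D.w * sR') := by rw [← D.hw_mem.2 sR' hsR'm, ← mul_assoc]
      _ = D.lam⁻¹ • ((D.lam⁻¹ • (D.e1 * sR)) * sR') := by rw [hw1]
      _ = D.lam⁻¹ • (D.lam⁻¹ • (D.e1 * (sR * sR'))) := by rw [smul_mul_assoc, mul_assoc]
  have h6 : (D.lam * D.lam) • D.e1 = D.e1 * (sR * sR') := by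
    conv_lhs => rw [star]
    rw [smul_smul, smul_smul]
    have hc : D.lam * D.lam * D.lam⁻¹ * D.lam⁻¹ = 1 := by
      calc D.lam * D.lam * D.lam⁻¹ * D.lam⁻¹ = (D.lam * D.lam⁻¹) * (D.lam * D.lam⁻¹) := by ring
        _ = 1 := by rw [mul_inv_cancel₀ D.lam_ne, one_mul]
    rw [hc, one_smul]
  calc D.e1 = D.lam⁻¹ • (D.lam⁻¹ • ((D.lam * D.lam) • D.e1)) := by
        rw [smul_smul, smul_smul]
        have hc : D.lam⁻¹ * D.lam⁻¹ * (D.lam * D.lam) = 1 := by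
          calc D.lam⁻¹ * D.lam⁻¹ * (D.lam * D.lam) = (D.lam⁻¹ * D.lam) * (D.lam⁻¹ * D.lam) := by
                ring
            _ = 1 := by rw [inv_mul_cancel₀ D.lam_ne, one_mul]
        rw [hc, one_smul]
    _ = D.lam⁻¹ • (D.lam⁻¹ • (D.e1 * (sR * sR'))) := by rw [h6]
    _ = D.lam⁻¹ • ((D.lam⁻¹ • (D.e1 * sR)) * sR') := by rw [smul_mul_assoc, mul_assoc]
    _ = D.lam⁻¹ • (D.e1 * D.w * sR') := by rw [← hw1]

lemma P2_good {n : ℕ} {b1 b2 : Fin n → R} {b : R} (hb : D.MC b)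
    (h1 : ∀ i, D.MC (b1 i)) (h2 : ∀ i, D.MC (b2 i))
    (hrep : D.Δ b = ∑ i, b1 i ⊗ₜ[k] b2 i) :
    ∀ x ∈ D.M1, D.winv * x * b
      = D.lam⁻¹ • ∑ i, b2 i * D.winv * D.EM1 (D.e2 * x * b1 i) := by
  have P1 := D.P1_good hb h1 h2 hrep
  -- the special instances x = m * (e1 * w) * m2 with m, m2 ∈ M
  have base : ∀ m ∈ D.M, ∀ m2 ∈ D.M, D.winv * (m * (D.e1 * D.w) * m2) * b
      = D.lam⁻¹ • ∑ i, b2 i * D.winv * D.EM1 (D.e2 * (m * (D.e1 * D.w) * m2) * b1 i) := by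
    intro m hm m2 hm2
    have hL : D.winv * (m * (D.e1 * D.w) * m2) * b
        = m * (D.winv * D.e1 * D.w * b) * m2 := by
      have c1 : D.winv * m = m * D.winv := D.mc_winv m hm
      have c2 : m2 * b = b * m2 := (hb m2 hm2).symm
      calc D.winv * (m * (D.e1 * D.w) * m2) * b
          = D.winv * m * (D.e1 * (D.w * (m2 * b))) := by simp only [mul_assoc]
        _ = m * D.winv * (D.e1 * (D.w * (b * m2))) := by rw [c1, c2]
        _ = m * (D.winv * D.e1 * D.w * b) * m2 := by simp only [mul_assoc]
    have hR : ∀ i, D.EM1 (D.e2 * (m * (D.e1 * D.w) * m2) * b1 i)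
        = m * D.EM1 (D.e2 * D.e1 * D.w * b1 i) * m2 := by
      intro i
      have c3 : D.e2 * m = m * D.e2 := D.mc_e2 m hm
      have c4 : m2 * b1 i = b1 i * m2 := (h1 i m2 hm2).symm
      have harg : D.e2 * (m * (D.e1 * D.w) * m2) * b1 i
          = m * (D.e2 * D.e1 * D.w * b1 i) * m2 := by
        calc D.e2 * (m * (D.e1 * D.w) * m2) * b1 i
            = D.e2 * m * (D.e1 * (D.w * (m2 * b1 i))) := by simp only [mul_assoc]
          _ = m * D.e2 * (D.e1 * (D.w * (b1 i * m2))) := by rw [c3, c4]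
          _ = m * (D.e2 * D.e1 * D.w * b1 i) * m2 := by simp only [mul_assoc]
      rw [harg, D.hEM1_right m2 (D.hMM1 hm2) _, D.hEM1_left m (D.hMM1 hm) _]
    calc D.winv * (m * (D.e1 * D.w) * m2) * b
        = m * (D.winv * D.e1 * D.w * b) * m2 := hL
      _ = m * (D.lam⁻¹ • ∑ i, b2 i * D.winv * D.EM1 (D.e2 * D.e1 * D.w * b1 i)) * m2 := by
          rw [P1]
      _ = D.lam⁻¹ • ∑ i, m * (b2 i * D.winv * D.EM1 (D.e2 * D.e1 * D.w * b1 i)) * m2 := by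
          rw [mul_smul_comm, smul_mul_assoc, Finset.mul_sum, Finset.sum_mul]
      _ = D.lam⁻¹ • ∑ i, b2 i * D.winv * D.EM1 (D.e2 * (m * (D.e1 * D.w) * m2) * b1 i) := by
          congr 1
          refine Finset.sum_congr rfl fun i _ => ?_
          rw [hR i]
          have c5 : m * b2 i = b2 i * m := (h2 i m hm).symm
          calc m * (b2 i * D.winv * D.EM1 (D.e2 * D.e1 * D.w * b1 i)) * m2
              = m * b2 i * (D.winv * (D.EM1 (D.e2 * D.e1 * D.w * b1 i) * m2)) := by
                simp only [mul_assoc]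
            _ = b2 i * m * (D.winv * (D.EM1 (D.e2 * D.e1 * D.w * b1 i) * m2)) := by rw [c5]
            _ = b2 i * (m * D.winv) * (D.EM1 (D.e2 * D.e1 * D.w * b1 i) * m2) := by
                simp only [mul_assoc]
            _ = b2 i * (D.winv * m) * (D.EM1 (D.e2 * D.e1 * D.w * b1 i) * m2) := by
                rw [D.mc_winv m hm]
            _ = b2 i * D.winv * (m * D.EM1 (D.e2 * D.e1 * D.w * b1 i) * m2) := by
                simp only [mul_assoc]
  -- generators m * e1 * m'
  have gen : ∀ m ∈ D.M, ∀ m' ∈ D.M, D.winv * (m * D.e1 * m') * b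
      = D.lam⁻¹ • ∑ i, b2 i * D.winv * D.EM1 (D.e2 * (m * D.e1 * m') * b1 i) := by
    intro m hm m' hm'
    set sR' := D.EM (D.e1 * D.winv) with hsR'
    have hsR'm : sR' ∈ D.M := D.hEM_mem _ (D.M1.mul_mem D.he1_mem D.hwinv_mem.1)
    have hdec : m * D.e1 * m' = D.lam⁻¹ • (m * (D.e1 * D.w) * (sR' * m')) := by
      conv_lhs => rw [D.e1_eq]
      rw [mul_smul_comm, smul_mul_assoc]
      congr 1
      simp only [mul_assoc, hsR']
    have hbase := base m hm (sR' * m') (D.M.mul_mem hsR'm hm')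
    rw [hdec]
    calc D.winv * (D.lam⁻¹ • (m * (D.e1 * D.w) * (sR' * m'))) * b
        = D.lam⁻¹ • (D.winv * (m * (D.e1 * D.w) * (sR' * m')) * b) := by
          rw [mul_smul_comm, smul_mul_assoc]
      _ = D.lam⁻¹ • (D.lam⁻¹ • ∑ i, b2 i * D.winv *
            D.EM1 (D.e2 * (m * (D.e1 * D.w) * (sR' * m')) * b1 i)) := by rw [hbase]
      _ = D.lam⁻¹ • ∑ i, b2 i * D.winv *
            D.EM1 (D.e2 * (D.lam⁻¹ • (m * (D.e1 * D.w) * (sR' * m'))) * b1 i) := by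
          congr 1
          rw [Finset.smul_sum]
          refine Finset.sum_congr rfl fun i _ => ?_
          conv_rhs => rw [mul_smul_comm, smul_mul_assoc, map_smul, mul_smul_comm]
  -- span induction
  have main : ∀ x ∈ Submodule.span k {z : R | ∃ m ∈ D.M, ∃ m' ∈ D.M, z = m * D.e1 * m'},
      D.winv * x * b = D.lam⁻¹ • ∑ i, b2 i * D.winv * D.EM1 (D.e2 * x * b1 i) := by
    intro x hx
    induction hx using Submodule.span_induction with
    | mem z hz =>
      obtain ⟨m, hm, m', hm', rfl⟩ := hz
      exact gen m hm m' hm'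
    | zero => simp
    | add x y hxs hys ihx ihy =>
      calc D.winv * (x + y) * b = D.winv * x * b + D.winv * y * b := by
            rw [mul_add, add_mul]
        _ = D.lam⁻¹ • ∑ i, b2 i * D.winv * D.EM1 (D.e2 * (x + y) * b1 i) := by
            rw [ihx, ihy, ← smul_add, ← Finset.sum_add_distrib]
            congr 1
            refine Finset.sum_congr rfl fun i _ => ?_
            rw [mul_add, add_mul, map_add, mul_add]
    | smul c x hxs ih =>
      calc D.winv * (c • x) * b = c • (D.winv * x * b) := by
            rw [mul_smul_comm, smul_mul_assoc]
        _ = D.lam⁻¹ • ∑ i, b2 i * D.winv * D.EM1 (D.e2 * (c • x) * b1 i) := by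
            rw [ih, smul_comm]
            congr 1
            rw [Finset.smul_sum]
            refine Finset.sum_congr rfl fun i _ => ?_
            conv_rhs => rw [mul_smul_comm, smul_mul_assoc, map_smul, mul_smul_comm]
  intro x hx
  exact main x (by rw [← D.hM1_gen]; exact hx)

end D2H
namespace D2H

variable {k : Type*} [Field k] {R : Type*} [Ring R] [Algebra k R]

/-- The linear map `R ⊗ R → R` sending `p ⊗ q` to `q w⁻¹ E_{M₁}(e₂ x p)`. -/
noncomputable def Phi (D : D2H k R) (x : R) : R ⊗[k] R →ₗ[k] R :=
  TensorProduct.lift (LinearMap.mk₂ k (fun p q => q * (D.winv * D.EM1 (D.e2 * x * p)))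
    (fun p p' q => by rw [mul_add, map_add, mul_add, mul_add])
    (fun c p q => by rw [mul_smul_comm, map_smul, mul_smul_comm, mul_smul_comm])
    (fun p q q' => by rw [add_mul])
    (fun c p q => by rw [smul_mul_assoc]))

variable (D : D2H k R)

lemma Phi_tmul (x p q : R) : D.Phi x (p ⊗ₜ[k] q) = q * (D.winv * D.EM1 (D.e2 * x * p)) := by
  simp [Phi]

lemma Phi_sum {n : ℕ} (p q : Fin n → R) (x : R) :
    D.Phi x (∑ i, p i ⊗ₜ[k] q i) = ∑ i, q i * D.winv * D.EM1 (D.e2 * x * p i) := by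
  rw [map_sum]
  exact Finset.sum_congr rfl fun i _ => by
    rw [D.Phi_tmul]
    exact (mul_assoc _ _ _).symm

end D2H
open D2 D2H

/-- key commutation relation: for all `b ∈ B`,
`w⁻¹ e₁ w b = λ⁻¹ b₍₂₎ w⁻¹ E_A(e₂ e₁ w b₍₁₎)`; consequently, for all `x ∈ M₁`,
`w⁻¹ x b = λ⁻¹ b₍₂₎ w⁻¹ E_{M₁}(e₂ x b₍₁₎)`, and for all `x, y ∈ M₁`,
`E_{M₁}(e₂ w y x b) = λ⁻¹ E_{M₁}(e₂ w y b₍₂₎) w⁻¹ E_{M₁}(e₂ w x b₍₁₎)`.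
(Sweedler sums are expressed through an arbitrary finite representation
`Δ(b) = ∑ b1 i ⊗ b2 i`.) -/
theorem stmt11 {k : Type*} [Field k] {R : Type*} [Ring R] [Algebra k R] (D : D2H k R) :
    ∀ b ∈ D2.B D.toD2S.toD2,
    ∀ (m : ℕ) (b1 b2 : Fin m → R), D.Δ b = ∑ i, b1 i ⊗ₜ[k] b2 i →
      (D.winv * D.e1 * D.w * b
        = D.lam⁻¹ • ∑ i, b2 i * D.winv * D.EM1 (D.e2 * D.e1 * D.w * b1 i)) ∧
      (∀ x ∈ D.M1, D.winv * x * b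
        = D.lam⁻¹ • ∑ i, b2 i * D.winv * D.EM1 (D.e2 * x * b1 i)) ∧
      (∀ x ∈ D.M1, ∀ y ∈ D.M1,
        D.EM1 (D.e2 * D.w * y * x * b)
          = D.lam⁻¹ • ∑ i, D.EM1 (D.e2 * D.w * y * b2 i) * D.winv *
              D.EM1 (D.e2 * D.w * x * b1 i)) := by
  intro b hbB m b1 b2 hrep
  have hb : D.MC b := fun y hy => (((Subalgebra.mem_centralizer_iff k).1 hbB) y hy).symm
  -- extract a representation of `Δ b` with components in `B`
  obtain ⟨nn, cf, g, hgsum⟩ := Submodule.mem_span_set'.1 (D.hΔ_mem b hb)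
  choose c1 hc1 c2 hc2 hce using fun i : Fin nn => (g i).2
  set d1 : Fin nn → R := fun i => cf i • c1 i with hd1
  have hrep' : D.Δ b = ∑ i, d1 i ⊗ₜ[k] c2 i := by
    rw [← hgsum]
    refine Finset.sum_congr rfl fun i _ => ?_
    rw [hce i, TensorProduct.smul_tmul']
  have hd1mc : ∀ i, D.MC (d1 i) := fun i => D.mc_smul _ (hc1 i)
  have hc2mc : ∀ i, D.MC (c2 i) := fun i => hc2 i
  have P2 := D.P2_good hb hd1mc hc2mc hrep'
  -- representation independence
  have transfer : ∀ x : R, (∑ i, b2 i * D.winv * D.EM1 (D.e2 * x * b1 i))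
      = ∑ i, c2 i * D.winv * D.EM1 (D.e2 * x * d1 i) := by
    intro x
    rw [← D.Phi_sum b1 b2 x, ← D.Phi_sum d1 c2 x, ← hrep, ← hrep']
  have part2 : ∀ x ∈ D.M1, D.winv * x * b
      = D.lam⁻¹ • ∑ i, b2 i * D.winv * D.EM1 (D.e2 * x * b1 i) := by
    intro x hx
    rw [transfer x]
    exact P2 x hx
  have part1 : D.winv * D.e1 * D.w * b
      = D.lam⁻¹ • ∑ i, b2 i * D.winv * D.EM1 (D.e2 * D.e1 * D.w * b1 i) := by
    have h := part2 (D.e1 * D.w) (D.M1.mul_mem D.he1_mem D.hw_mem.1)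
    calc D.winv * D.e1 * D.w * b = D.winv * (D.e1 * D.w) * b := by
          rw [mul_assoc D.winv]
      _ = D.lam⁻¹ • ∑ i, b2 i * D.winv * D.EM1 (D.e2 * (D.e1 * D.w) * b1 i) := h
      _ = D.lam⁻¹ • ∑ i, b2 i * D.winv * D.EM1 (D.e2 * D.e1 * D.w * b1 i) := by
          congr 1
          exact Finset.sum_congr rfl fun i _ => by rw [← mul_assoc D.e2]
  refine ⟨part1, part2, ?_⟩
  intro x hx y hy
  have h := part2 (D.w * x) (D.M1.mul_mem D.hw_mem.1 hx)
  have hxb : x * b = D.lam⁻¹ • ∑ i, b2 i * D.winv * D.EM1 (D.e2 * (D.w * x) * b1 i) := by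
    rw [← h, ← mul_assoc D.winv D.w x, D.hw_inv.2, one_mul]
  calc D.EM1 (D.e2 * D.w * y * x * b)
      = D.EM1 ((D.e2 * D.w * y) * (x * b)) := by rw [mul_assoc (D.e2 * D.w * y)]
    _ = D.EM1 ((D.e2 * D.w * y) * (D.lam⁻¹ • ∑ i, b2 i * D.winv *
          D.EM1 (D.e2 * (D.w * x) * b1 i))) := by rw [hxb]
    _ = D.lam⁻¹ • ∑ i, D.EM1 ((D.e2 * D.w * y) * (b2 i * D.winv *
          D.EM1 (D.e2 * (D.w * x) * b1 i))) := by
        rw [mul_smul_comm, map_smul, Finset.mul_sum, map_sum]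
    _ = D.lam⁻¹ • ∑ i, D.EM1 (D.e2 * D.w * y * b2 i) * D.winv *
          D.EM1 (D.e2 * D.w * x * b1 i) := by
        congr 1
        refine Finset.sum_congr rfl fun i _ => ?_
        have harg : (D.e2 * D.w * y) * (b2 i * D.winv * D.EM1 (D.e2 * (D.w * x) * b1 i))
            = (D.e2 * D.w * y * b2 i) * (D.winv * D.EM1 (D.e2 * D.w * x * b1 i)) := by
          simp only [mul_assoc]
        rw [harg, D.hEM1_right _ (D.M1.mul_mem D.hwinv_mem.1 (D.hEM1_mem _)) _, ← mul_assoc]
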